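/- The pairing h^{Sp}_n is a symmetric bilinear form on K^{2n}; its radical is exactly the line K·(1,1,…,1); and the induced nondegenerate symmetric bilinear form on the quotient K^{2n}/K·(1,…,1) has discriminant 2^{2n−1}(−1)^{n−1} modulo squares, i.e. for any basis of the quotient the Gram determinant of the induced form equals 2^{2n−1}(−1)^{n−1}·c² for some c ∈ K^×. -/

import Mathlib

open Finset

/-- Extract the `k`-th coordinate (with 1-based subscripts `1 ≤ k ≤ N`) of a
vector `x ∈ K^N`, returning `0` for out-of-range subscripts. -/
def coordFn {K : Type*} [Zero K] (N : ℕ) (x : Fin N → K) (k : ℕ) : K :=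
  if hk : 1 ≤ k ∧ k ≤ N then x ⟨k - 1, by omega⟩ else 0

/-- The symmetric bilinear form `h^{Sp}_n` on `K^{2n}` attached to the affine generic
stratum of the symplectic group `Sp_{2n}`:
`h^{Sp}_n(x,y) = (1/2)[(x_1 − x_{2n})y_1 + Σ_{i=2}^{2n}(x_{2n+2−i} − x_{2n+1−i})y_i]`. -/
def hSp {K : Type*} [Field K] (n : ℕ) (x y : Fin (2 * n) → K) : K :=
  let X := coordFn (2 * n) x
  let Y := coordFn (2 * n) y
  (2 : K)⁻¹ *
    ((X 1 - X (2 * n)) * Y 1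
      + ∑ i ∈ Finset.Icc 2 (2 * n), (X (2 * n + 2 - i) - X (2 * n + 1 - i)) * Y i)

/-- The line `K·(1,…,1)` in `K^N`. -/
def allOnesLine (K : Type*) [Field K] (N : ℕ) : Submodule K (Fin N → K) :=
  Submodule.span K {fun _ => (1 : K)}

def negf {N : ℕ} (i : Fin N) : Fin N := ⟨(N - (i:ℕ)) % N, Nat.mod_lt _ i.pos⟩

lemma negf_val {N : ℕ} (i : Fin N) :
    ((negf i : Fin N) : ℕ) = if (i:ℕ) = 0 then 0 else N - (i:ℕ) := by
  have hi := i.isLt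
  rcases eq_or_ne (i:ℕ) 0 with h | h
  · simp [negf, h, Nat.mod_self]
  · simp [negf, h, Nat.mod_eq_of_lt (by omega : N - (i:ℕ) < N)]

lemma negf_negf {N : ℕ} (i : Fin N) : negf (negf i) = i := by
  have hi := i.isLt
  apply Fin.ext
  rw [negf_val, negf_val]
  rcases eq_or_ne (i:ℕ) 0 with h | h
  · simp [h]
  · rw [if_neg h, if_neg (by omega)]; omega

def negfEquiv (N : ℕ) : Equiv.Perm (Fin N) :=
  Function.Involutive.toPerm negf negf_negf

lemma coordFn_eq {K : Type*} [Zero K] {N : ℕ} (x : Fin N → K) {k : ℕ}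
    (h1 : 1 ≤ k) (h2 : k ≤ N) : coordFn N x k = x ⟨k - 1, by omega⟩ :=
  dif_pos ⟨h1, h2⟩

lemma hSp_eq {K : Type*} [Field K] {n : ℕ} (hn : 1 ≤ n) (x y : Fin (2 * n) → K) :
    hSp n x y = 2⁻¹ * ∑ i : Fin (2 * n), (x (negf i) - x (Fin.rev i)) * y i := by
  have hN1 : 1 ≤ 2 * n := by omega
  have key : ∀ i : Fin (2 * n), (x (negf i) - x (Fin.rev i)) * y i =
      (fun j : ℕ => (coordFn (2*n) x (if j = 0 then 1 else 2*n + 1 - j)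
        - coordFn (2*n) x (2*n - j)) * coordFn (2*n) y (j + 1)) (i : ℕ) := by
    intro i
    have hi := i.isLt
    simp only
    rcases eq_or_ne (i:ℕ) 0 with h | h
    · rw [if_pos h, coordFn_eq x (by omega) (by omega), coordFn_eq x (by omega) (by omega),
        coordFn_eq y (by omega) (by omega)]
      congr 2 <;> apply congrArg <;> apply Fin.ext <;>
        simp [negf_val, Fin.val_rev, h] <;> omega
    · rw [if_neg h, coordFn_eq x (by omega) (by omega), coordFn_eq x (by omega) (by omega),
        coordFn_eq y (by omega) (by omega)]
      congr 2 <;> apply congrArg <;> apply Fin.ext <;>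
        simp [negf_val, Fin.val_rev, h] <;> omega
  have hsum : ∑ i : Fin (2*n), (x (negf i) - x (Fin.rev i)) * y i
      = ∑ j ∈ Finset.range (2*n),
          ((coordFn (2*n) x (if j = 0 then 1 else 2*n + 1 - j)
            - coordFn (2*n) x (2*n - j)) * coordFn (2*n) y (j + 1)) := by
    rw [← Fin.sum_univ_eq_sum_range]
    exact Finset.sum_congr rfl fun i _ => key i
  have hsplit := Finset.sum_range_succ'
      (fun j => (coordFn (2*n) x (if j = 0 then 1 else 2*n + 1 - j)
        - coordFn (2*n) x (2*n - j)) * coordFn (2*n) y (j + 1)) (2*n - 1)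
  rw [show 2*n - 1 + 1 = 2*n from by omega] at hsplit
  have hIcc : ∑ i ∈ Finset.Icc 2 (2*n),
        (coordFn (2*n) x (2*n + 2 - i) - coordFn (2*n) x (2*n + 1 - i)) * coordFn (2*n) y i
      = ∑ j ∈ Finset.range (2*n - 1),
        (coordFn (2*n) x (if j + 1 = 0 then 1 else 2*n + 1 - (j+1))
          - coordFn (2*n) x (2*n - (j+1))) * coordFn (2*n) y (j + 1 + 1) := by
    rw [← Finset.Ico_add_one_right_eq_Icc, Finset.sum_Ico_eq_sum_range,
      show 2*n + 1 - 2 = 2*n - 1 from by omega]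
    refine Finset.sum_congr rfl fun j hj => ?_
    rw [if_neg (by omega), show 2*n + 2 - (2 + j) = 2*n + 1 - (j+1) from by omega,
      show 2*n + 1 - (2 + j) = 2*n - (j+1) from by omega,
      show 2 + j = j + 1 + 1 from by omega]
  show (2:K)⁻¹ * _ = _
  rw [hsum, hsplit, hIcc]
  rw [show (0:ℕ)+1 = 1 from rfl, if_pos rfl, show 2*n - 0 = 2*n from rfl]
  ring

section
variable {K : Type*} [Field K]

lemma hSp_symm {n : ℕ} (hn : 1 ≤ n) (x y : Fin (2 * n) → K) :
    hSp n x y = hSp n y x := by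
  rw [hSp_eq hn, hSp_eq hn]
  congr 1
  have e1 : ∑ i : Fin (2*n), x (negf i) * y i = ∑ i : Fin (2*n), y (negf i) * x i := by
    rw [← Equiv.sum_comp (negfEquiv (2*n)) (fun i => y (negf i) * x i)]
    refine Finset.sum_congr rfl fun i _ => ?_
    have : negf (negfEquiv (2*n) i) = i := negf_negf i
    simp only [negfEquiv, Function.Involutive.coe_toPerm] at this ⊢
    rw [this, mul_comm]; rfl
  have e2 : ∑ i : Fin (2*n), x (Fin.rev i) * y i = ∑ i : Fin (2*n), y (Fin.rev i) * x i := by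
    rw [← Equiv.sum_comp (Fin.revPerm) (fun i => y (Fin.rev i) * x i)]
    refine Finset.sum_congr rfl fun i _ => ?_
    simp [Fin.rev_rev, mul_comm]
  simp only [sub_mul, Finset.sum_sub_distrib, e1, e2]

lemma hSp_left {n : ℕ} (hn : 1 ≤ n) (a : K) (x x' y : Fin (2 * n) → K) :
    hSp n (a • x + x') y = a * hSp n x y + hSp n x' y := by
  rw [hSp_eq hn, hSp_eq hn, hSp_eq hn]
  have : ∑ i : Fin (2*n), ((a • x + x') (negf i) - (a • x + x') (Fin.rev i)) * y i
      = a * ∑ i : Fin (2*n), (x (negf i) - x (Fin.rev i)) * y i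
        + ∑ i : Fin (2*n), (x' (negf i) - x' (Fin.rev i)) * y i := by
    rw [Finset.mul_sum, ← Finset.sum_add_distrib]
    refine Finset.sum_congr rfl fun i _ => ?_
    simp only [Pi.add_apply, Pi.smul_apply, smul_eq_mul]
    ring
  rw [this]; ring

lemma hSp_right {n : ℕ} (hn : 1 ≤ n) (a : K) (x y y' : Fin (2 * n) → K) :
    hSp n x (a • y + y') = a * hSp n x y + hSp n x y' := by
  rw [hSp_symm hn, hSp_symm hn x y, hSp_symm hn x y', hSp_left hn]

lemma radical_eq {n : ℕ} (h2 : (2:K) ≠ 0) (hn : 1 ≤ n) :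
    {x : Fin (2 * n) → K | ∀ y, hSp n x y = 0}
      = (allOnesLine K (2 * n) : Set (Fin (2 * n) → K)) := by
  have hN1 : 1 ≤ 2 * n := by omega
  ext x
  simp only [Set.mem_setOf_eq, SetLike.mem_coe]
  constructor
  · intro h
    have hj : ∀ j : Fin (2*n), x (negf j) = x (Fin.rev j) := by
      intro j
      have := h (Pi.single j 1)
      rw [hSp_eq hn] at this
      have hsum : ∑ i : Fin (2*n), (x (negf i) - x (Fin.rev i)) * (Pi.single j 1 : Fin (2*n) → K) i
          = x (negf j) - x (Fin.rev j) := by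
        rw [Finset.sum_eq_single j]
        · simp
        · intro i _ hij
          rw [Pi.single_eq_of_ne hij, mul_zero]
        · simp
      rw [hsum] at this
      have := (mul_eq_zero.mp this).resolve_left (inv_ne_zero h2)
      exact sub_eq_zero.mp this
    -- all coordinates equal
    have hconst : ∀ k (hk : k < 2*n), x ⟨k, hk⟩ = x ⟨0, by omega⟩ := by
      intro k
      induction k with
      | zero => intro hk; rfl
      | succ m ih =>
        intro hk
        have hm : m < 2*n := by omega
        have hjlt : 2*n - 1 - m < 2*n := by omega
        have := hj ⟨2*n - 1 - m, hjlt⟩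
        have e1 : negf (⟨2*n - 1 - m, hjlt⟩ : Fin (2*n)) = ⟨m+1, hk⟩ := by
          apply Fin.ext; rw [negf_val]; simp only; rw [if_neg (by omega)]; omega
        have e2 : Fin.rev (⟨2*n - 1 - m, hjlt⟩ : Fin (2*n)) = ⟨m, hm⟩ := by
          apply Fin.ext; rw [Fin.val_rev]; simp only; omega
        rw [e1, e2] at this
        rw [this, ih hm]
    rw [allOnesLine, Submodule.mem_span_singleton]
    refine ⟨x ⟨0, by omega⟩, ?_⟩
    funext i
    have := hconst i.val i.isLt
    simp only [Pi.smul_apply, smul_eq_mul, mul_one]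
    rw [← this]
  · intro hx y
    rw [allOnesLine, Submodule.mem_span_singleton] at hx
    obtain ⟨a, rfl⟩ := hx
    rw [hSp_eq hn]
    simp
end

def Tmat (K : Type*) [Field K] (m : ℕ) : Matrix (Fin m) (Fin m) K :=
  Matrix.of fun k j => if (k:ℕ) + (j:ℕ) + 1 ≤ m then (2:K)⁻¹ else 0

lemma Tmat_det (K : Type*) [Field K] (m : ℕ) :
    (Tmat K m).det = (-1) ^ (m / 2) * ((2:K)⁻¹) ^ m := by
  induction m with
  | zero => simp [Matrix.det_fin_zero]
  | succ m ih =>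
    rw [Matrix.det_succ_row (Tmat K (m+1)) (Fin.last m)]
    rw [Finset.sum_eq_single (0 : Fin (m+1))]
    · have hminor : (Tmat K (m+1)).submatrix (Fin.last m).succAbove (Fin.succAbove 0)
          = Tmat K m := by
        ext k j
        simp only [Matrix.submatrix_apply, Fin.succAbove_last, Fin.succAbove_zero, Tmat,
          Matrix.of_apply, Fin.coe_castSucc, Fin.val_succ]
        have hk := k.isLt
        by_cases h : (k:ℕ) + (j:ℕ) + 1 ≤ m
        · rw [if_pos (by omega), if_pos h]
        · rw [if_neg (by omega), if_neg h]
      rw [hminor, ih]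
      have hentry : Tmat K (m+1) (Fin.last m) 0 = 2⁻¹ := by
        simp only [Tmat, Matrix.of_apply, Fin.val_last, Fin.val_zero]
        exact if_pos (by omega)
      rw [hentry]
      simp only [Fin.val_last, Fin.val_zero, Nat.add_zero]
      have hs : (-1:K)^m * (-1)^(m/2) = (-1)^((m+1)/2) := by
        rcases Nat.even_or_odd m with ⟨c, rfl⟩ | ⟨c, rfl⟩
        · rw [show (c + c + 1) / 2 = c from by omega, show (c + c) / 2 = c from by omega,
            show c + c = 2 * c from by ring, pow_mul]
          norm_num
        · have h1 : (-1:K)^(2*c) = 1 := by rw [pow_mul]; norm_num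
          rw [show (2*c + 1 + 1) / 2 = c + 1 from by omega,
            show (2*c + 1) / 2 = c from by omega, pow_succ, h1, one_mul, pow_succ]
          ring
      rw [pow_succ, ← hs]
      ring
    · intro j _ hj
      have : Tmat K (m+1) (Fin.last m) j = 0 := by
        simp only [Tmat, Matrix.of_apply, Fin.val_last]
        rw [if_neg (by
          have := Fin.val_ne_of_ne hj
          simp only [Fin.val_zero] at this
          omega)]
      rw [this, mul_zero, zero_mul]
    · intro h
      exact absurd (Finset.mem_univ _) h


section
variable {K : Type*} [Field K]

/-- the reference vectors: indicator of an initial segment -/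
def vvec (K : Type*) [Field K] (n : ℕ) (j : Fin (2*n-1)) : Fin (2*n) → K :=
  fun i => if (i:ℕ) ≤ (j:ℕ) then 1 else 0

lemma hSp_zero_left {n : ℕ} (hn : 1 ≤ n) (y : Fin (2*n) → K) : hSp n (0 : Fin (2*n) → K) y = 0 := by
  rw [hSp_eq hn]; simp

lemma hSp_add_left {n : ℕ} (hn : 1 ≤ n) (x x' y : Fin (2*n) → K) :
    hSp n (x + x') y = hSp n x y + hSp n x' y := by
  have := hSp_left hn 1 x x' y
  rwa [one_smul, one_mul] at this

lemma hSp_smul_left {n : ℕ} (hn : 1 ≤ n) (a : K) (x y : Fin (2*n) → K) :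
    hSp n (a • x) y = a * hSp n x y := by
  have := hSp_left hn a x 0 y
  rwa [add_zero, hSp_zero_left hn, add_zero] at this

lemma hSp_sum_left {n : ℕ} (hn : 1 ≤ n) {ι : Type*} (s : Finset ι)
    (f : ι → (Fin (2*n) → K)) (y : Fin (2*n) → K) :
    hSp n (∑ k ∈ s, f k) y = ∑ k ∈ s, hSp n (f k) y := by
  induction s using Finset.cons_induction with
  | empty => simpa using hSp_zero_left hn y
  | cons a s ha ih =>
    rw [Finset.sum_cons, Finset.sum_cons, hSp_add_left hn, ih]

lemma hSp_vvec {n : ℕ} (hn : 1 ≤ n) (j l : Fin (2*n-1)) :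
    hSp n (vvec K n j) (vvec K n l) = Tmat K (2*n-1) j l := by
  haveI : NeZero (2*n) := ⟨by omega⟩
  have hj := j.isLt
  have hl := l.isLt
  rw [hSp_eq hn]
  have key : ∀ i : Fin (2*n),
      (vvec K n j (negf i) - vvec K n j (Fin.rev i)) * vvec K n l i
        = (if i = (0 : Fin (2*n)) then vvec K n l i else 0)
          - (if i = (⟨2*n - 1 - (j:ℕ), by omega⟩ : Fin (2*n)) then vvec K n l i else 0) := by
    intro i
    have hi := i.isLt
    simp only [vvec, negf_val, Fin.val_rev, Fin.ext_iff, Fin.val_zero]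
    split_ifs <;> (first | ring1 | (exfalso; omega))
  rw [Finset.sum_congr rfl fun i _ => key i, Finset.sum_sub_distrib,
    Finset.sum_ite_eq' Finset.univ, Finset.sum_ite_eq' Finset.univ]
  simp only [Finset.mem_univ, if_true, vvec, Fin.val_zero, Tmat, Matrix.of_apply]
  simp only [Nat.zero_le, if_true]
  by_cases h : (j:ℕ) + (l:ℕ) + 1 ≤ 2*n - 1
  · rw [if_neg (by omega), if_pos h]; ring
  · rw [if_pos (by omega), if_neg h]; ring

lemma discriminant {n : ℕ} (h2 : (2:K) ≠ 0) (hn : 1 ≤ n)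
    (b : Fin (2 * n - 1) → (Fin (2 * n) → K))
    (hli : LinearIndependent K (fun i => (allOnesLine K (2 * n)).mkQ (b i)))
    (hsp : Submodule.span K (Set.range fun i => (allOnesLine K (2 * n)).mkQ (b i)) = ⊤) :
    ∃ c : K, c ≠ 0 ∧
      (Matrix.of fun i j => hSp n (b i) (b j)).det
        = 2 ^ (2 * n - 1) * (-1) ^ (n - 1) * c ^ 2 := by
  have hsp' : ⊤ ≤ Submodule.span K (Set.range fun i => (allOnesLine K (2 * n)).mkQ (b i)) :=
    le_of_eq hsp.symm
  set π := (allOnesLine K (2 * n)).mkQ with hπ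
  set B : Module.Basis (Fin (2*n-1)) K _ := Module.Basis.mk hli hsp' with hB
  set G : Matrix (Fin (2*n-1)) (Fin (2*n-1)) K := Matrix.of fun i j => hSp n (b i) (b j) with hG
  set D : Matrix (Fin (2*n-1)) (Fin (2*n-1)) K :=
    Matrix.of fun j k => (B.repr (π (vvec K n j))) k with hD
  have hrepr : ∀ j, π (vvec K n j) = ∑ k, D j k • π (b k) := by
    intro j
    conv_lhs => rw [← B.sum_repr (π (vvec K n j))]
    refine Finset.sum_congr rfl fun k _ => ?_
    congr 1
    rw [hB, Module.Basis.mk_apply]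
  have hmem : ∀ j, vvec K n j - ∑ k, D j k • b k ∈ allOnesLine K (2 * n) := by
    intro j
    rw [← Submodule.Quotient.mk_eq_zero]
    have : π (vvec K n j - ∑ k, D j k • b k) = 0 := by
      rw [map_sub, map_sum, hrepr j]
      simp [map_smul]
    simpa [hπ, Submodule.mkQ_apply] using this
  have hrad : ∀ r, r ∈ allOnesLine K (2 * n) → ∀ y, hSp n r y = 0 := by
    intro r hr
    have : r ∈ {x : Fin (2*n) → K | ∀ y, hSp n x y = 0} := by
      rw [radical_eq h2 hn]; exact hr
    exact this
  have hGram : ∀ j l, Tmat K (2*n-1) j l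
      = ∑ k, ∑ k', D j k * D l k' * hSp n (b k) (b k') := by
    intro j l
    rw [← hSp_vvec hn j l]
    have hjv : vvec K n j = (∑ k, D j k • b k) + (vvec K n j - ∑ k, D j k • b k) := by abel
    have hlv : vvec K n l = (∑ k, D l k • b k) + (vvec K n l - ∑ k, D l k • b k) := by abel
    rw [hjv, hlv, hSp_add_left hn]
    rw [hrad _ (hmem j) _, add_zero]
    rw [hSp_symm hn, hSp_add_left hn, hrad _ (hmem l) _, add_zero, hSp_symm hn]
    rw [hSp_sum_left hn]
    refine Finset.sum_congr rfl fun k _ => ?_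
    rw [hSp_smul_left hn, hSp_symm hn, hSp_sum_left hn, Finset.mul_sum]
    refine Finset.sum_congr rfl fun k' _ => ?_
    rw [hSp_smul_left hn, hSp_symm hn]
    ring
  have hMat : Tmat K (2*n-1) = D * G * D.transpose := by
    ext j l
    rw [hGram j l]
    simp only [Matrix.mul_apply, Matrix.transpose_apply, Finset.sum_mul]
    rw [Finset.sum_comm]
    refine Finset.sum_congr rfl fun k' _ => ?_
    refine Finset.sum_congr rfl fun k _ => ?_
    simp only [hG, hD, Matrix.of_apply]
    ring
  have hdet := congrArg Matrix.det hMat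
  rw [Matrix.det_mul, Matrix.det_mul, Matrix.det_transpose, Tmat_det,
    show (2*n-1) / 2 = n - 1 from by omega] at hdet
  have h2inv : (2:K)⁻¹ ≠ 0 := inv_ne_zero h2
  have hne : ((-1:K)) ^ (n-1) * (2:K)⁻¹ ^ (2*n-1) ≠ 0 :=
    mul_ne_zero (pow_ne_zero _ (by norm_num)) (pow_ne_zero _ h2inv)
  have hDne : D.det ≠ 0 := by
    intro h
    rw [h, zero_mul, zero_mul] at hdet
    exact hne hdet
  refine ⟨(2:K)⁻¹ ^ (2*n-1) * (D.det)⁻¹,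
    mul_ne_zero (pow_ne_zero _ h2inv) (inv_ne_zero hDne), ?_⟩
  have hkey : (2:K) ^ (2*n-1) * (2:K)⁻¹ ^ (2*n-1) = 1 := by
    rw [← mul_pow, mul_inv_cancel₀ h2, one_pow]
  have hGdet : G.det = ((-1:K)) ^ (n-1) * (2:K)⁻¹ ^ (2*n-1) * ((D.det)⁻¹ * (D.det)⁻¹) := by
    have h1 : G.det = (D.det)⁻¹ * ((-1:K)^(n-1) * (2:K)⁻¹ ^ (2*n-1)) * (D.det)⁻¹ := by
      rw [hdet]
      field_simp
    rw [h1]; ring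
  have hq : (2:K)^(2*n-1) * (((2:K)⁻¹^(2*n-1)) * (D.det)⁻¹)^2
      = (2:K)⁻¹^(2*n-1) * ((D.det)⁻¹ * (D.det)⁻¹) := by
    have expand : (2:K)^(2*n-1) * (((2:K)⁻¹^(2*n-1)) * (D.det)⁻¹)^2
        = ((2:K)^(2*n-1) * (2:K)⁻¹^(2*n-1)) * ((2:K)⁻¹^(2*n-1) * ((D.det)⁻¹ * (D.det)⁻¹)) := by
      ring
    rw [expand, hkey, one_mul]
  show G.det = _
  rw [hGdet]
  linear_combination (-((-1:K))^(n-1)) * hq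

end

/-- `h^{Sp}_n` is a symmetric bilinear form on `K^{2n}`; its radical is
exactly the line `K·(1,…,1)`; and the induced nondegenerate symmetric bilinear form on
the quotient `K^{2n}/K·(1,…,1)` has discriminant `2^{2n−1}(−1)^{n−1}` modulo squares:
for any basis of the quotient the Gram determinant of the induced form equals
`2^{2n−1}(−1)^{n−1}·c²` for some `c ∈ K^×`. -/
theorem hSp_symm_radical_discriminant
    (K : Type) [Field K] (h2 : (2 : K) ≠ 0) (n : ℕ) (hn : 1 ≤ n) :
    (∀ x y : Fin (2 * n) → K, hSp n x y = hSp n y x) ∧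
    (∀ (a : K) (x x' y : Fin (2 * n) → K),
        hSp n (a • x + x') y = a * hSp n x y + hSp n x' y) ∧
    (∀ (a : K) (x y y' : Fin (2 * n) → K),
        hSp n x (a • y + y') = a * hSp n x y + hSp n x y') ∧
    ({x : Fin (2 * n) → K | ∀ y, hSp n x y = 0}
        = (allOnesLine K (2 * n) : Set (Fin (2 * n) → K))) ∧
    (∀ b : Fin (2 * n - 1) → (Fin (2 * n) → K),
        LinearIndependent K (fun i => (allOnesLine K (2 * n)).mkQ (b i)) →
        Submodule.span K (Set.range fun i => (allOnesLine K (2 * n)).mkQ (b i)) = ⊤ →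
        ∃ c : K, c ≠ 0 ∧
          (Matrix.of fun i j => hSp n (b i) (b j)).det
            = 2 ^ (2 * n - 1) * (-1) ^ (n - 1) * c ^ 2) := by
  refine ⟨fun x y => hSp_symm hn x y,
    fun a x x' y => hSp_left hn a x x' y,
    fun a x y y' => hSp_right hn a x y y',
    radical_eq h2 hn,
    fun b hli hsp => discriminant h2 hn b hli hsp⟩
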